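/- There is no 11-dimensional F₂-linear subspace of F₂^{836} in which every nonzero codeword has Hamming weight in {416, 448}. -/

import Mathlib

open Finset
set_option linter.unusedSectionVars false
set_option maxRecDepth 16000

section Counting

variable {V : Type*} [AddCommGroup V] [Module (ZMod 2) V] [Fintype V] [DecidableEq V]

private lemma zmod2_cases : ∀ a : ZMod 2, a = 0 ∨ a = 1 := by decide

/-- fibers of a linear map over points in the range all have the same cardinality -/
private lemma fiber_card_eq {W : Type*} [AddCommGroup W] [Module (ZMod 2) W] [DecidableEq W]
    (f : V →ₗ[ZMod 2] W) (v₀ : V) (w : W) (h : f v₀ = w) :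
    (univ.filter fun v => f v = w).card = (univ.filter fun v => f v = 0).card := by
  apply Finset.card_bij (fun v _ => v - v₀)
  · intro a ha
    simp only [mem_filter, mem_univ, true_and] at ha ⊢
    rw [map_sub, ha, h, sub_self]
  · intro a ha b hb hab
    exact sub_left_injective hab
  · intro b hb
    simp only [mem_filter, mem_univ, true_and] at hb ⊢
    exact ⟨b + v₀, by rw [map_add, hb, h, zero_add], by abel⟩

private lemma two_fibers (f : V →ₗ[ZMod 2] ZMod 2) (hf : f ≠ 0) :
    2 * (univ.filter fun v => f v = 1).card = Fintype.card V := by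
  obtain ⟨v₀, hv₀⟩ : ∃ v, f v = 1 := by
    by_contra h
    push_neg at h
    exact hf (LinearMap.ext fun v => (zmod2_cases (f v)).resolve_right (h v))
  have hsplit : (univ.filter fun v => f v = 0).card + (univ.filter fun v => f v = 1).card
      = Fintype.card V := by
    rw [← Finset.card_union_of_disjoint]
    · congr 1
      apply Finset.eq_univ_iff_forall.mpr
      intro v
      rcases zmod2_cases (f v) with h | h <;> simp [h]
    · rw [Finset.disjoint_filter]
      intro v _ h0 h1
      rw [h0] at h1
      exact absurd h1 (by decide)
  have := fiber_card_eq f v₀ 1 hv₀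
  omega

private lemma pair_surj (f g : V →ₗ[ZMod 2] ZMod 2) (hf : f ≠ 0) (hg : g ≠ 0) (hfg : f ≠ g)
    (a b : ZMod 2) : ∃ v, f v = a ∧ g v = b := by
  obtain ⟨x, hx⟩ : ∃ x, f x ≠ g x := by
    by_contra h; push_neg at h; exact hfg (LinearMap.ext h)
  obtain ⟨y, hy⟩ : ∃ y, f y = 1 := by
    by_contra h
    push_neg at h
    exact hf (LinearMap.ext fun v => (zmod2_cases (f v)).resolve_right (h v))
  obtain ⟨z, hz⟩ : ∃ z, g z = 1 := by
    by_contra h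
    push_neg at h
    exact hg (LinearMap.ext fun v => (zmod2_cases (g v)).resolve_right (h v))
  -- get u with f u = 1, g u = 0
  have h10 : ∃ u, f u = 1 ∧ g u = 0 := by
    rcases zmod2_cases (g y) with h | h
    · exact ⟨y, hy, h⟩
    · rcases zmod2_cases (f x) with h1 | h1 <;> rcases zmod2_cases (g x) with h2 | h2
      · exact absurd (h1.trans h2.symm) hx
      · refine ⟨x + y, by simp [map_add, h1, hy], by rw [map_add, h2, h]; decide⟩
      · exact ⟨x, h1, h2⟩
      · exact absurd (h1.trans h2.symm) hx
  have h01 : ∃ u, f u = 0 ∧ g u = 1 := by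
    rcases zmod2_cases (f z) with h | h
    · exact ⟨z, h, hz⟩
    · rcases zmod2_cases (f x) with h1 | h1 <;> rcases zmod2_cases (g x) with h2 | h2
      · exact absurd (h1.trans h2.symm) hx
      · exact ⟨x, h1, h2⟩
      · refine ⟨x + z, by rw [map_add, h1, h]; decide, by simp [map_add, h2, hz]⟩
      · exact absurd (h1.trans h2.symm) hx
  obtain ⟨u, hu1, hu2⟩ := h10
  obtain ⟨u', hu1', hu2'⟩ := h01
  rcases zmod2_cases a with ha | ha <;> rcases zmod2_cases b with hb | hb
  · exact ⟨0, by simp [ha], by simp [hb]⟩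
  · exact ⟨u', by simp [hu1', ha], by simp [hu2', hb]⟩
  · exact ⟨u, by simp [hu1, ha], by simp [hu2, hb]⟩
  · exact ⟨u + u', by simp [map_add, hu1, hu1', ha], by simp [map_add, hu2, hu2', hb]⟩

private lemma four_fibers (f g : V →ₗ[ZMod 2] ZMod 2) (hf : f ≠ 0) (hg : g ≠ 0) (hfg : f ≠ g) :
    4 * (univ.filter fun v => f v = 1 ∧ g v = 1).card = Fintype.card V := by
  set F : V →ₗ[ZMod 2] ZMod 2 × ZMod 2 := f.prod g with hF
  have key : ∀ a b : ZMod 2,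
      (univ.filter fun v => F v = (a, b)).card = (univ.filter fun v => F v = 0).card := by
    intro a b
    obtain ⟨v₀, h1, h2⟩ := pair_surj f g hf hg hfg a b
    exact fiber_card_eq F v₀ (a, b) (by simp [hF, LinearMap.prod_apply, h1, h2, Prod.ext_iff])
  have hsplit : ∑ p : ZMod 2 × ZMod 2, (univ.filter fun v => F v = p).card = Fintype.card V := by
    rw [← Finset.card_eq_sum_card_fiberwise (f := F) (t := univ) (fun v _ => mem_univ _)]
    simp
  have hcardp : Fintype.card (ZMod 2 × ZMod 2) = 4 := by decide
  have h4 : (4 : ℕ) * (univ.filter fun v => F v = 0).card = Fintype.card V := by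
    rw [← hsplit, Finset.sum_congr rfl (fun p _ => key p.1 p.2)]
    simp [Finset.sum_const, hcardp, mul_comm]
  have h11 : (univ.filter fun v => f v = 1 ∧ g v = 1).card
      = (univ.filter fun v => F v = ((1 : ZMod 2), (1 : ZMod 2))).card := by
    congr 1
    apply Finset.filter_congr
    intro v _
    simp [hF, LinearMap.prod_apply, Prod.ext_iff]
  rw [h11, key 1 1, h4]

end Counting

set_option maxHeartbeats 2000000 in
/-- There is no 11-dimensional binary linear code of length 836 in which every nonzero
codeword has Hamming weight 416 or 448. -/
theorem no_two_weight_code_836 :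
    ¬ ∃ C : Submodule (ZMod 2) (Fin 836 → ZMod 2),
        Module.finrank (ZMod 2) C = 11 ∧
        (∀ c ∈ C, c ≠ 0 → hammingNorm c ∈ ({416, 448} : Set ℕ)) := by
  classical
  rintro ⟨C, hrk, hw⟩
  haveI : Fintype C := Fintype.ofFinite C
  have hcard : Fintype.card C = 2048 := by
    have h := Module.card_eq_pow_finrank (K := ZMod 2) (V := C)
    rw [hrk, ZMod.card] at h
    norm_num at h
    exact h
  -- coordinate functionals
  set f : Fin 836 → (C →ₗ[ZMod 2] ZMod 2) := fun i => (LinearMap.proj i).comp C.subtype with hfdef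
  -- weight as integer sum
  have hwt : ∀ c : C, (hammingNorm (c : Fin 836 → ZMod 2) : ℤ)
      = ∑ i : Fin 836, (if f i c = 1 then (1 : ℤ) else 0) := by
    intro c
    rw [hammingNorm]
    rw [Finset.card_filter]
    push_cast
    apply Finset.sum_congr rfl
    intro i _
    have : ((c : Fin 836 → ZMod 2) i ≠ 0) ↔ f i c = 1 := by
      simp only [hfdef, LinearMap.comp_apply, LinearMap.proj_apply, Submodule.coe_subtype]
      rcases zmod2_cases ((c : Fin 836 → ZMod 2) i) with h | h <;> simp [h]
    simp [this]
  -- fiber counts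
  set N : Fin 836 → ℕ := fun i => (univ.filter fun c : C => f i c = 1).card with hNdef
  set N2 : Fin 836 → Fin 836 → ℕ :=
    fun i j => (univ.filter fun c : C => f i c = 1 ∧ f j c = 1).card with hN2def
  have hfirst : ∑ c : C, (hammingNorm (c : Fin 836 → ZMod 2) : ℤ) = ∑ i : Fin 836, (N i : ℤ) := by
    rw [Finset.sum_congr rfl fun c _ => hwt c, Finset.sum_comm]
    apply Finset.sum_congr rfl
    intro i _
    rw [hNdef]
    push_cast
    rw [Finset.sum_boole]
  have hsecond : ∑ c : C, (hammingNorm (c : Fin 836 → ZMod 2) : ℤ) ^ 2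
      = ∑ i : Fin 836, ∑ j : Fin 836, (N2 i j : ℤ) := by
    have step : ∀ c : C, (hammingNorm (c : Fin 836 → ZMod 2) : ℤ) ^ 2
        = ∑ i : Fin 836, ∑ j : Fin 836, (if f i c = 1 ∧ f j c = 1 then (1 : ℤ) else 0) := by
      intro c
      rw [sq, hwt c, Finset.sum_mul_sum]
      apply Finset.sum_congr rfl; intro i _
      apply Finset.sum_congr rfl; intro j _
      by_cases h1 : f i c = 1 <;> by_cases h2 : f j c = 1 <;> simp [h1, h2]
    rw [Finset.sum_congr rfl fun c _ => step c, Finset.sum_comm]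
    apply Finset.sum_congr rfl
    intro i _
    rw [Finset.sum_comm]
    apply Finset.sum_congr rfl
    intro j _
    rw [hN2def]
    push_cast
    rw [Finset.sum_boole]
  -- the support of the columns
  set M : Finset (Fin 836) := univ.filter (fun i => f i ≠ 0) with hMdef
  have hm836 : M.card ≤ 836 := by
    calc M.card ≤ (univ : Finset (Fin 836)).card := Finset.card_filter_le _ _
    _ = 836 := by rw [Finset.card_univ, Fintype.card_fin]
  have hNval : ∀ i ∈ M, N i = 1024 := by
    intro i hi
    rw [hMdef, Finset.mem_filter] at hi
    have := two_fibers (f i) hi.2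
    rw [hcard] at this
    have h2 : 2 * N i = 2048 := this
    omega
  have hNzero : ∀ i ∉ M, N i = 0 := by
    intro i hi
    rw [hMdef, Finset.mem_filter] at hi
    push_neg at hi
    have hfi : f i = 0 := hi (mem_univ i)
    rw [hNdef]
    simp only [hfi, LinearMap.zero_apply]
    rw [Finset.card_eq_zero, Finset.filter_eq_empty_iff]
    intro c _
    decide
  have hN2val : ∀ i ∈ M, ∀ j ∈ M,
      (N2 i j : ℤ) = 512 + (if f i = f j then (512 : ℤ) else 0) := by
    intro i hi j hj
    rw [hMdef, Finset.mem_filter] at hi hj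
    by_cases hij : f i = f j
    · have hset : (univ.filter fun c : C => f i c = 1 ∧ f j c = 1)
          = (univ.filter fun c : C => f i c = 1) := by
        apply Finset.filter_congr
        intro c _
        simp [hij]
      have : N2 i j = N i := by
        show (univ.filter fun c : C => f i c = 1 ∧ f j c = 1).card
          = (univ.filter fun c : C => f i c = 1).card
        rw [hset]
      rw [this, hNval i (by rw [hMdef, Finset.mem_filter]; exact hi)]
      simp [hij]
    · have := four_fibers (f i) (f j) hi.2 hj.2 hij
      rw [hcard] at this
      have h4 : 4 * N2 i j = 2048 := this
      have : N2 i j = 512 := by omega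
      rw [this]
      simp [hij]
  have hN2zero : ∀ i j : Fin 836, i ∉ M ∨ j ∉ M → N2 i j = 0 := by
    intro i j hij
    rw [hN2def, Finset.card_eq_zero, Finset.filter_eq_empty_iff]
    intro c _
    rcases hij with h | h <;>
    · rw [hMdef, Finset.mem_filter] at h
      push_neg at h
      have h0 := h (mem_univ _)
      rw [h0]
      simp only [LinearMap.zero_apply]
      intro hc
      first
        | exact absurd hc.1 (by decide)
        | exact absurd hc.2 (by decide)
  -- total first moment
  have hsum1 : ∑ i : Fin 836, (N i : ℤ) = 1024 * M.card := by
    rw [← Finset.sum_subset (Finset.subset_univ M)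
      (fun i _ hi => by rw [hNzero i hi]; norm_num)]
    rw [Finset.sum_congr rfl (fun i hi => by rw [hNval i hi])]
    simp [mul_comm]
  -- total second moment
  set S : ℕ := ((M ×ˢ M).filter fun p => f p.1 = f p.2).card with hSdef
  have hsum2 : ∑ i : Fin 836, ∑ j : Fin 836, (N2 i j : ℤ)
      = 512 * (M.card : ℤ) * M.card + 512 * S := by
    have outer : ∀ i : Fin 836, i ∉ M → ∑ j : Fin 836, (N2 i j : ℤ) = 0 := by
      intro i hi
      apply Finset.sum_eq_zero
      intro j _
      rw [hN2zero i j (Or.inl hi)]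
      norm_num
    rw [← Finset.sum_subset (Finset.subset_univ M) (fun i _ hi => outer i hi)]
    have inner : ∀ i ∈ M, ∑ j : Fin 836, (N2 i j : ℤ)
        = ∑ j ∈ M, (512 + if f i = f j then (512 : ℤ) else 0) := by
      intro i hi
      rw [← Finset.sum_subset (Finset.subset_univ M)
        (fun j _ hj => by rw [hN2zero i j (Or.inr hj)]; norm_num)]
      exact Finset.sum_congr rfl (fun j hj => hN2val i hi j hj)
    rw [Finset.sum_congr rfl inner]
    rw [Finset.sum_congr rfl (fun i (hi : i ∈ M) => Finset.sum_add_distrib)]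
    rw [Finset.sum_add_distrib]
    have hA : ∑ _i ∈ M, ∑ _j ∈ M, (512 : ℤ) = 512 * (M.card : ℤ) * M.card := by
      simp only [Finset.sum_const, nsmul_eq_mul]
      ring
    have hB : ∑ i ∈ M, ∑ j ∈ M, (if f i = f j then (512 : ℤ) else 0) = 512 * S := by
      rw [← Finset.sum_product' (f := fun i j => if f i = f j then (512 : ℤ) else 0)]
      rw [← Finset.sum_filter]
      rw [Finset.sum_const, nsmul_eq_mul, hSdef, mul_comm]
    rw [hA, hB]
  -- S ≥ m
  have hSm : M.card ≤ S := by
    rw [hSdef]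
    apply Finset.card_le_card_of_injOn (fun i => (i, i))
    · intro i hi
      rw [Finset.mem_coe, Finset.mem_filter]
      exact ⟨Finset.mem_product.mpr ⟨hi, hi⟩, rfl⟩
    · intro a _ b _ h
      exact (Prod.mk.injEq _ _ _ _).mp h |>.1
  -- the key identity
  have hT : ∑ c : C, ((hammingNorm (c : Fin 836 → ZMod 2) : ℤ) - 416)
      * ((hammingNorm (c : Fin 836 → ZMod 2) : ℤ) - 448) = 186368 := by
    rw [Finset.sum_eq_single_of_mem (0 : C) (mem_univ _)]
    · have h0 : ((0 : C) : Fin 836 → ZMod 2) = 0 := rfl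
      rw [h0, hammingNorm_zero]
      norm_num
    · intro c _ hc
      have hcne : (c : Fin 836 → ZMod 2) ≠ 0 := by
        simpa using hc
      have := hw (c : Fin 836 → ZMod 2) c.2 hcne
      simp only [Set.mem_insert_iff, Set.mem_singleton_iff] at this
      rcases this with h | h <;> rw [h] <;> norm_num
  have hexpand : ∑ c : C, ((hammingNorm (c : Fin 836 → ZMod 2) : ℤ) - 416)
      * ((hammingNorm (c : Fin 836 → ZMod 2) : ℤ) - 448)
      = (∑ c : C, (hammingNorm (c : Fin 836 → ZMod 2) : ℤ) ^ 2)
        - 864 * (∑ c : C, (hammingNorm (c : Fin 836 → ZMod 2) : ℤ))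
        + 186368 * 2048 := by
    rw [Finset.mul_sum]
    rw [← Finset.sum_sub_distrib]
    have : (186368 : ℤ) * 2048 = ∑ _c : C, (186368 : ℤ) := by
      rw [Finset.sum_const, Finset.card_univ, hcard]
      norm_num
    rw [this, ← Finset.sum_add_distrib]
    apply Finset.sum_congr rfl
    intro c _
    ring
  rw [hexpand, hsecond, hfirst, hsum1, hsum2] at hT
  have key : (0 : ℤ) ≤ (836 - (M.card : ℤ)) * (891 - M.card) := by
    apply mul_nonneg <;> omega
  have hSm' : (M.card : ℤ) ≤ S := by exact_mod_cast hSm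
  nlinarith [hT, key, hSm']
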